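/- Let a < a' < b' < b and define κ₁ = (S(a') − S(a))/(S(b') − S(a')) and κ₂ = (S(b) − S(b'))/(S(b') − S(a')). Then for all x, y ∈ [a',b'], G(a,b,x,y) ≥ (κ₁κ₂/(1 + κ₁ + κ₂)) · (S(b') − S(a')). -/

import Mathlib

open Set

/-- The Green kernel `G(a,b,x,y)` on `[a,b]`. -/
noncomputable def greenKernel (S : ℝ → ℝ) (a b x y : ℝ) : ℝ :=
  if y ≤ x then (S b - S x) * (S y - S a) / (S b - S a)
  else (S b - S y) * (S x - S a) / (S b - S a)

/-- Let `a < a' < b' < b`, `κ₁ = (S(a') − S(a))/(S(b') − S(a'))` and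
`κ₂ = (S(b) − S(b'))/(S(b') − S(a'))`. Then for all `x, y ∈ [a',b']`,
`G(a,b,x,y) ≥ (κ₁κ₂/(1 + κ₁ + κ₂))·(S(b') − S(a'))`. -/
theorem green_kernel_lower_bound
    (S : ℝ → ℝ) (hScont : Continuous S) (hSmono : StrictMono S)
    (a a' b' b : ℝ) (haa' : a < a') (ha'b' : a' < b') (hb'b : b' < b)
    (κ₁ κ₂ : ℝ)
    (hκ₁ : κ₁ = (S a' - S a) / (S b' - S a'))
    (hκ₂ : κ₂ = (S b - S b') / (S b' - S a')) :
    ∀ x ∈ Icc a' b', ∀ y ∈ Icc a' b',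
      κ₁ * κ₂ / (1 + κ₁ + κ₂) * (S b' - S a') ≤ greenKernel S a b x y := by
  have hA : S a < S a' := hSmono haa'
  have hd : S a' < S b' := hSmono ha'b'
  have hB : S b' < S b := hSmono hb'b
  have hκ₁pos : 0 < κ₁ := by rw [hκ₁]; exact div_pos (by linarith) (by linarith)
  have hκ₂pos : 0 < κ₂ := by rw [hκ₂]; exact div_pos (by linarith) (by linarith)
  have key : κ₁ * κ₂ / (1 + κ₁ + κ₂) * (S b' - S a')
      = (S b - S b') * (S a' - S a) / (S b - S a) := by
    rw [hκ₁, hκ₂]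
    have h1 : S b' - S a' ≠ 0 := by linarith
    have h2 : S b - S a ≠ 0 := by linarith
    have h3 : (1 : ℝ) + (S a' - S a) / (S b' - S a') + (S b - S b') / (S b' - S a') ≠ 0 := by
      have := hκ₁pos; have := hκ₂pos
      rw [hκ₁] at hκ₁pos; rw [hκ₂] at hκ₂pos
      positivity
    have h4 : (1:ℝ) + (S a' - S a) / (S b' - S a') + (S b - S b') / (S b' - S a') = (S b - S a) / (S b' - S a') := by field_simp; ring
    rw [h4]
    field_simp
  intro x hx y hy
  have hsx1 : S a' ≤ S x := hSmono.le_iff_le.mpr hx.1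
  have hsx2 : S x ≤ S b' := hSmono.le_iff_le.mpr hx.2
  have hsy1 : S a' ≤ S y := hSmono.le_iff_le.mpr hy.1
  have hsy2 : S y ≤ S b' := hSmono.le_iff_le.mpr hy.2
  rw [key]
  unfold greenKernel
  split
  · gcongr <;> linarith
  · gcongr <;> linarith
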